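/- Let n ≥ 2, let a ≤ b be nonnegative integers, and let D = (d_1, d_2, …, d_n) be a nondecreasing sequence of nonnegative integers that is the score sequence of some (a,b,n)-tournament. Then for every k with 1 ≤ k ≤ n it holds that a·B_k ≤ S_k ≤ b·B_n − L_k − (n−k)·d_k, where B_k = k(k−1)/2, S_k = d_1 + ⋯ + d_k, L_0 = 0 and L_k = max(L_{k−1}, b·B_k − S_k). -/
import Mathlib


/-- `D` is the score sequence of some `(a,b,n)`-tournament. -/
def IsScoreSeqAB (n : ℕ) (a b : ℕ) (D : Fin n → ℕ) : Prop :=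
  ∃ M : Fin n → Fin n → ℕ,
    (∀ i, M i i = 0) ∧
    (∀ i j, i ≠ j → a ≤ M i j + M j i ∧ M i j + M j i ≤ b) ∧
    (∀ i, ∑ j, M i j = D i)

/-- Partial sum `S_k = d_1 + ⋯ + d_k` (as an integer). -/
def Spart (n : ℕ) (D : Fin n → ℕ) (k : ℕ) : ℤ :=
  ∑ i : Fin n, if (i : ℕ) < k then (D i : ℤ) else 0

/-- `B_k = k(k-1)/2` (as an integer). -/
def Bbin (k : ℕ) : ℤ := (k * (k - 1) / 2 : ℕ)

/-- The loss function: `L_0 = 0`, `L_k = max (L_{k-1}, b·B_k − S_k)`, computed in `ℤ`. -/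
def Lloss (n : ℕ) (D : Fin n → ℕ) (b : ℕ) : ℕ → ℤ
  | 0 => 0
  | k + 1 => max (Lloss n D b k) ((b : ℤ) * Bbin (k + 1) - Spart n D (k + 1))

open Finset

/-- The set of the first `k` players. -/
def Ffin (n k : ℕ) : Finset (Fin n) := Finset.univ.filter (fun i => (i : ℕ) < k)

@[simp] lemma mem_Ffin {n k : ℕ} {i : Fin n} : i ∈ Ffin n k ↔ (i : ℕ) < k := by
  simp [Ffin]

lemma card_Ffin (n k : ℕ) (hk : k ≤ n) : (Ffin n k).card = k := by
  have : Ffin n k = (univ : Finset (Fin k)).map (Fin.castLEEmb hk) := by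
    ext i
    simp only [mem_Ffin, mem_map, mem_univ, true_and, Fin.castLEEmb,
      Function.Embedding.coeFn_mk]
    constructor
    · intro h; exact ⟨⟨i, h⟩, rfl⟩
    · rintro ⟨j, rfl⟩; simpa using j.isLt
  rw [this, card_map, card_univ, Fintype.card_fin]

lemma card_Ffin_compl (n k : ℕ) (hk : k ≤ n) : ((Ffin n k)ᶜ).card = n - k := by
  rw [card_compl, card_Ffin n k hk, Fintype.card_fin]

lemma Spart_eq (n : ℕ) (D : Fin n → ℕ) (k : ℕ) :
    Spart n D k = ((∑ i ∈ Ffin n k, D i : ℕ) : ℤ) := by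
  rw [Spart, Ffin, Nat.cast_sum, Finset.sum_filter]

lemma castmul (k : ℕ) : ((k * (k - 1) : ℕ) : ℤ) = (k : ℤ) * ((k : ℤ) - 1) := by
  cases k with
  | zero => simp
  | succ m => push_cast; ring

lemma twoBbin (k : ℕ) : 2 * Bbin k = (k : ℤ) * ((k : ℤ) - 1) := by
  have he : Even (k * (k - 1)) := by
    cases k with
    | zero => simp
    | succ m => simpa [mul_comm] using Nat.even_mul_succ_self m
  obtain ⟨c, hc⟩ := he
  rw [← castmul, Bbin, hc]
  have : (c + c) / 2 = c := by omega
  rw [this]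
  push_cast; ring

/-- Key counting upper bound: total score of the top `n - j` players. -/
lemma key_upper (n b : ℕ) (M : Fin n → Fin n → ℕ) (hdiag : ∀ i, M i i = 0)
    (hb : ∀ i j, i ≠ j → M i j + M j i ≤ b) (D : Fin n → ℕ)
    (hrow : ∀ i, ∑ j, M i j = D i) (j : ℕ) (hj : j ≤ n) :
    2 * ∑ i ∈ (Ffin n j)ᶜ, D i ≤ b * ((n - j) * (n - j - 1) + 2 * ((n - j) * j)) := by
  set T := (Ffin n j)ᶜ with hT
  have hcT : T.card = n - j := card_Ffin_compl n j hj
  have hcTc : Tᶜ.card = j := by rw [hT, compl_compl, card_Ffin n j hj]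
  have hcross : ∀ i ∈ T, ∑ l ∈ Tᶜ, M i l ≤ j * b := by
    intro i hi
    calc ∑ l ∈ Tᶜ, M i l ≤ Tᶜ.card • b := by
          apply Finset.sum_le_card_nsmul
          intro l hl
          have hne : i ≠ l := by
            intro h; exact (Finset.mem_compl.mp hl) (h ▸ hi)
          exact le_trans (Nat.le_add_right _ _) (hb i l hne)
      _ = j * b := by rw [hcTc, smul_eq_mul]
  have hwithin : ∀ i ∈ T, ∑ l ∈ T, (M i l + M l i) ≤ (n - j - 1) * b := by
    intro i hi
    rw [← Finset.add_sum_erase T _ hi, hdiag i]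
    simp only [zero_add]
    calc ∑ l ∈ T.erase i, (M i l + M l i) ≤ (T.erase i).card • b := by
          apply Finset.sum_le_card_nsmul
          intro l hl
          exact hb i l (Ne.symm (Finset.ne_of_mem_erase hl))
      _ = (n - j - 1) * b := by rw [Finset.card_erase_of_mem hi, hcT, smul_eq_mul]
  have hD : ∀ i, D i = (∑ l ∈ T, M i l) + ∑ l ∈ Tᶜ, M i l := by
    intro i; rw [Finset.sum_add_sum_compl, hrow i]
  have hswap : ∑ i ∈ T, ∑ l ∈ T, M l i = ∑ i ∈ T, ∑ l ∈ T, M i l :=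
    Finset.sum_comm
  calc 2 * ∑ i ∈ T, D i
      = (∑ i ∈ T, ∑ l ∈ T, (M i l + M l i)) + 2 * ∑ i ∈ T, ∑ l ∈ Tᶜ, M i l := by
        simp only [hD, Finset.sum_add_distrib]
        rw [hswap]; ring
    _ ≤ (∑ _i ∈ T, (n - j - 1) * b) + 2 * ∑ _i ∈ T, j * b := by
        gcongr with i hi i hi
        · exact hwithin i hi
        · exact hcross i hi
    _ = (n - j) * ((n - j - 1) * b) + 2 * ((n - j) * (j * b)) := by
        rw [Finset.sum_const, Finset.sum_const, hcT, smul_eq_mul, smul_eq_mul]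
    _ = b * ((n - j) * (n - j - 1) + 2 * ((n - j) * j)) := by ring

/-- Key counting lower bound: total score of the first `k` players. -/
lemma key_lower (n a : ℕ) (M : Fin n → Fin n → ℕ) (hdiag : ∀ i, M i i = 0)
    (ha : ∀ i j, i ≠ j → a ≤ M i j + M j i) (D : Fin n → ℕ)
    (hrow : ∀ i, ∑ j, M i j = D i) (k : ℕ) (hk : k ≤ n) :
    a * (k * (k - 1)) ≤ 2 * ∑ i ∈ Ffin n k, D i := by
  set S := Ffin n k with hS
  have hcS : S.card = k := card_Ffin n k hk
  have hin : ∀ i ∈ S, (k - 1) * a ≤ ∑ l ∈ S, (M i l + M l i) := by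
    intro i hi
    rw [← Finset.add_sum_erase S _ hi, hdiag i]
    simp only [zero_add]
    calc (k - 1) * a = (S.erase i).card • a := by
          rw [Finset.card_erase_of_mem hi, hcS, smul_eq_mul]
      _ ≤ ∑ l ∈ S.erase i, (M i l + M l i) := by
          apply Finset.card_nsmul_le_sum
          intro l hl
          exact ha i l (Ne.symm (Finset.ne_of_mem_erase hl))
  have hswap : ∑ i ∈ S, ∑ l ∈ S, M l i = ∑ i ∈ S, ∑ l ∈ S, M i l :=
    Finset.sum_comm
  have hDi : ∀ i ∈ S, ∑ l ∈ S, M i l ≤ D i := by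
    intro i _
    rw [← hrow i]
    exact Finset.sum_le_sum_of_subset (Finset.subset_univ S)
  calc a * (k * (k - 1)) = ∑ _i ∈ S, (k - 1) * a := by
        rw [Finset.sum_const, hcS, smul_eq_mul]; ring
    _ ≤ ∑ i ∈ S, ∑ l ∈ S, (M i l + M l i) := Finset.sum_le_sum hin
    _ = 2 * ∑ i ∈ S, ∑ l ∈ S, M i l := by
        simp only [Finset.sum_add_distrib]; rw [hswap]; ring
    _ ≤ 2 * ∑ i ∈ S, D i := by
        gcongr with i hi
        exact hDi i hi

/-- For `n ≥ 2`, `a ≤ b`, if a nondecreasing sequence `D` of nonnegative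
integers is the score sequence of some `(a,b,n)`-tournament, then
`a·B_k ≤ S_k ≤ b·B_n − L_k − (n−k)·d_k` for every `1 ≤ k ≤ n`. -/
theorem isScoreSeqAB_necessary (n : ℕ) (hn : 2 ≤ n) (a b : ℕ) (hab : a ≤ b)
    (D : Fin n → ℕ) (hD : Monotone D) (hscore : IsScoreSeqAB n a b D) :
    ∀ k : ℕ, ∀ _hk1 : 1 ≤ k, ∀ _hk2 : k ≤ n,
      (a : ℤ) * Bbin k ≤ Spart n D k ∧
      Spart n D k ≤
        (b : ℤ) * Bbin n - Lloss n D b k - ((n - k : ℕ) : ℤ) * (D ⟨k - 1, by omega⟩ : ℤ) := by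
  obtain ⟨M, hdiag, hM, hrow⟩ := hscore
  intro k hk1 hk2
  constructor
  · -- lower bound
    have h := key_lower n a M hdiag (fun i j h => (hM i j h).1) D hrow k hk2
    have h' : (a : ℤ) * ((k * (k - 1) : ℕ) : ℤ) ≤ 2 * Spart n D k := by
      rw [Spart_eq]
      exact_mod_cast h
    rw [castmul] at h'
    have h2 : 2 * ((a : ℤ) * Bbin k) ≤ 2 * Spart n D k := by
      rw [mul_left_comm, twoBbin]; exact h'
    linarith
  · -- upper bound
    set d : ℤ := (D ⟨k - 1, by omega⟩ : ℤ) with hd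
    -- auxiliary inequality for each j ≤ k
    have aux : ∀ j : ℕ, j ≤ k →
        (b : ℤ) * Bbin j - Spart n D j ≤
          (b : ℤ) * Bbin n - Spart n D k - ((n - k : ℕ) : ℤ) * d := by
      intro j hjk
      have hjn : j ≤ n := le_trans hjk hk2
      -- e1 : Spart k = Spart j + sum over A
      have hsub : Ffin n j ⊆ Ffin n k := by
        intro i hi; rw [mem_Ffin] at *; omega
      have e1 : (((∑ i ∈ Ffin n k \ Ffin n j, D i) : ℕ) : ℤ) + Spart n D j
          = Spart n D k := by
        rw [Spart_eq, Spart_eq, ← Nat.cast_add]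
        norm_cast
        exact Finset.sum_sdiff hsub
      -- e2 : (n-k) * d ≤ sum over C
      have e2 : ((n - k : ℕ) : ℤ) * d ≤ (((∑ i ∈ (Ffin n k)ᶜ, D i) : ℕ) : ℤ) := by
        have : (n - k) * D ⟨k - 1, by omega⟩ ≤ ∑ i ∈ (Ffin n k)ᶜ, D i := by
          calc (n - k) * D ⟨k - 1, by omega⟩
              = ((Ffin n k)ᶜ).card • D ⟨k - 1, by omega⟩ := by
                rw [card_Ffin_compl n k hk2, smul_eq_mul]
            _ ≤ ∑ i ∈ (Ffin n k)ᶜ, D i := by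
                apply Finset.card_nsmul_le_sum
                intro i hi
                apply hD
                rw [Fin.le_def]
                simp only [Finset.mem_compl, mem_Ffin, not_lt] at hi
                simp only []
                omega
        rw [hd]
        exact_mod_cast this
      -- e3 : sum over A + sum over C = sum over B
      have hset : (Ffin n j)ᶜ = (Ffin n k \ Ffin n j) ∪ (Ffin n k)ᶜ := by
        ext i
        simp only [Finset.mem_compl, Finset.mem_union, Finset.mem_sdiff, mem_Ffin, not_lt]
        omega
      have hdisj : Disjoint (Ffin n k \ Ffin n j) ((Ffin n k)ᶜ) := by
        rw [Finset.disjoint_left]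
        intro i hi hi'
        rw [Finset.mem_sdiff] at hi
        exact (Finset.mem_compl.mp hi') hi.1
      have e3 : (∑ i ∈ Ffin n k \ Ffin n j, D i) + ∑ i ∈ (Ffin n k)ᶜ, D i
          = ∑ i ∈ (Ffin n j)ᶜ, D i := by
        rw [hset, Finset.sum_union hdisj]
      -- e4 : key upper bound, cast to ℤ
      have e4 : 2 * (((∑ i ∈ (Ffin n j)ᶜ, D i) : ℕ) : ℤ)
          ≤ 2 * ((b : ℤ) * Bbin n - (b : ℤ) * Bbin j) := by
        have h := key_upper n b M hdiag (fun i l h => (hM i l h).2) D hrow j hjn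
        have hcast : (((b * ((n - j) * (n - j - 1) + 2 * ((n - j) * j)) : ℕ)) : ℤ)
            = 2 * ((b : ℤ) * Bbin n - (b : ℤ) * Bbin j) := by
          have c1 : (((n - j) * (n - j - 1) : ℕ) : ℤ)
              = ((n : ℤ) - j) * ((n : ℤ) - j - 1) := by
            have := castmul (n - j)
            rw [this, Nat.cast_sub hjn]
          push_cast [c1, Nat.cast_sub hjn]
          linear_combination (b : ℤ) * twoBbin j - (b : ℤ) * twoBbin n
        calc 2 * (((∑ i ∈ (Ffin n j)ᶜ, D i) : ℕ) : ℤ)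
            = (((2 * ∑ i ∈ (Ffin n j)ᶜ, D i : ℕ)) : ℤ) := by push_cast; ring
          _ ≤ (((b * ((n - j) * (n - j - 1) + 2 * ((n - j) * j)) : ℕ)) : ℤ) := by
              exact_mod_cast h
          _ = 2 * ((b : ℤ) * Bbin n - (b : ℤ) * Bbin j) := hcast
      -- combine
      have e3' : (((∑ i ∈ Ffin n k \ Ffin n j, D i) : ℕ) : ℤ)
          + (((∑ i ∈ (Ffin n k)ᶜ, D i) : ℕ) : ℤ)
          = (((∑ i ∈ (Ffin n j)ᶜ, D i) : ℕ) : ℤ) := by exact_mod_cast e3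
      linarith
    -- now bound Lloss by induction
    have hL : ∀ m : ℕ, m ≤ k →
        Lloss n D b m ≤ (b : ℤ) * Bbin n - Spart n D k - ((n - k : ℕ) : ℤ) * d := by
      intro m
      induction m with
      | zero =>
        intro _
        have h0 := aux 0 (by omega)
        have hB0 : Bbin 0 = 0 := by simp [Bbin]
        have hS0 : Spart n D 0 = 0 := by simp [Spart]
        rw [hB0, hS0] at h0
        simpa [Lloss] using h0
      | succ m ih =>
        intro hm
        rw [Lloss]
        exact max_le (ih (by omega)) (aux (m + 1) hm)
    have := hL k le_rfl
    linarith
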